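/- arXiv:1701.08733 — 2 statements merged into one kernel-verified Lean document; each statement's English description precedes it below -/
import Mathlib

section
/- The family (E(π_{(i,j)}·[a_{ij}]·X^j))_{(i,j)∈𝔛} is multipliable in R'[[X]] with respect to its coefficient-wise topology; write E_f(X) = ∏_{(i,j)∈𝔛} E(π_{(i,j)}·[a_{ij}]·X^j) = ∑_{k≥0} η_k·X^k with η_k ∈ R'. Then for every k ∈ ℤ_{≥0} one has v(η_k) ∈ {k/δ, ∞}; in particular v(η_k) → ∞ as k → ∞. -/
open PowerSeries

noncomputable section

open scoped Classical

/-- The series ℓ(T) = ∑_{i≥0} T^{p^i}/p^i over ℚ. -/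
def lseries (p : ℕ) : PowerSeries ℚ :=
  PowerSeries.mk fun n => if ∃ i : ℕ, n = p ^ i then (n : ℚ)⁻¹ else 0

/-- Substitution `f(g)` of a power series `g` with zero constant coefficient
into a power series `f`. -/
def psComp {R : Type*} [CommSemiring R] (g f : PowerSeries R) : PowerSeries R :=
  PowerSeries.mk fun n =>
    ∑ k ∈ Finset.range (n + 1), PowerSeries.coeff k f * PowerSeries.coeff n (g ^ k)

/-- The Artin–Hasse exponential E(T) = exp(∑ T^{p^i}/p^i) over ℚ. -/
def artinHasse (p : ℕ) : PowerSeries ℚ := psComp (lseries p) (PowerSeries.exp ℚ)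

/-- The property that `Ep` is the Artin–Hasse exponential regarded as a power
series with coefficients in `ℤ_p`. -/
def IsArtinHasseZp (p : ℕ) [Fact p.Prime] (Ep : PowerSeries ℤ_[p]) : Prop :=
  PowerSeries.map (PadicInt.Coe.ringHom) Ep
    = PowerSeries.map (Rat.castHom ℚ_[p]) (artinHasse p)

/-- The index set 𝔛. -/
def Xfrak (p m dm : ℕ) : Set (ℕ × ℕ) :=
  {x | x.2 * p ^ m ≤ dm * p ^ x.1 ∧ ¬(0 < x.2 ∧ p ∣ x.2)}

/-- The valuation v, with v(π_{(i,j)}) = j/δ = j·p^m/d_m. -/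
def vR {A : Type*} [CommSemiring A] (p m dm : ℕ)
    (r : MvPowerSeries (Xfrak p m dm) A) : WithTop ℚ :=
  if r = 0 then ⊤
  else (((sInf {w : ℕ | ∃ u : (Xfrak p m dm) →₀ ℕ,
      MvPowerSeries.coeff u r ≠ 0 ∧ w = u.sum fun x k => x.1.2 * k} : ℕ) : ℚ)
    * (p : ℚ) ^ m / (dm : ℚ) : ℚ)

/-- ℤ_q = W(𝔽_q), the p-typical Witt vectors of 𝔽_q = GaloisField p a. -/
abbrev Zq (p a : ℕ) [Fact p.Prime] := WittVector p (GaloisField p a)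

/-- The inclusion ℤ_p = W(𝔽_p) → ℤ_q = W(𝔽_q). -/
def padicToZq (p a : ℕ) [Fact p.Prime] : ℤ_[p] →+* Zq p a :=
  (WittVector.map (algebraMap (ZMod p) (GaloisField p a))).comp
    (WittVector.equiv p).symm.toRingHom

/-- ℤ_q carries the discrete topology. -/
instance ZqTopology (p a : ℕ) [Fact p.Prime] : TopologicalSpace (Zq p a) := ⊥

/-- Multivariate power series carry the product (coefficient-wise) topology. -/
instance MvPowerSeries.topologicalSpace {σ R : Type*} [TopologicalSpace R] :
    TopologicalSpace (MvPowerSeries σ R) :=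
  inferInstanceAs (TopologicalSpace ((σ →₀ ℕ) → R))

/-- Substitution `f(g)` of a multivariate power series `g` with zero constant
coefficient into a one-variable power series `f`. -/
def psSubst {σ A : Type*} [CommRing A] (g : MvPowerSeries σ A) (f : PowerSeries A) :
    MvPowerSeries σ A :=
  fun u => ∑ k ∈ Finset.range ((u.sum fun _ c => c) + 1),
    PowerSeries.coeff k f * MvPowerSeries.coeff u (g ^ k)

variable (p a m dm : ℕ) [Fact p.Prime]

/-- `R'[[X]]`, regarded as the ring of formal power series over ℤ_q in the
variables {π_x : x ∈ 𝔛} ∪ {X}: the variable `some x` is π_x, and `none` is X. -/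
abbrev BigB := MvPowerSeries (Option (Xfrak p m dm)) (Zq p a)

/-- The factor E(π_{(i,j)}·[a_{ij}]·X^j) of E_f, an element of `R'[[X]]`. -/
def EfFactor (aa : Xfrak p m dm → GaloisField p a) (Ep : PowerSeries ℤ_[p])
    (x : Xfrak p m dm) : BigB p a m dm :=
  psSubst
    (MvPowerSeries.C (σ := Option (Xfrak p m dm)) (R := Zq p a) (WittVector.teichmuller p (aa x))
      * MvPowerSeries.X (some x) * MvPowerSeries.X none ^ x.1.2)
    (PowerSeries.map (padicToZq p a) Ep)

/-- E_f = ∏_{(i,j)∈𝔛} E(π_{(i,j)}·[a_{ij}]·X^j). -/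
def Ef (aa : Xfrak p m dm → GaloisField p a) (Ep : PowerSeries ℤ_[p]) : BigB p a m dm :=
  ∏' x : Xfrak p m dm, EfFactor p a m dm aa Ep x

/-- The coefficient η_k ∈ R' of X^k in an element of `R'[[X]]`. -/
def xCoeff (g : BigB p a m dm) (k : ℕ) : MvPowerSeries (Xfrak p m dm) (Zq p a) :=
  fun u => MvPowerSeries.coeff (R := Zq p a) (Finsupp.mapDomain some u + Finsupp.single none k) g


-- ===== auxiliary lemmas =====

instance st13_discrete : DiscreteTopology (Zq p a) := ⟨rfl⟩

instance st13_t2 : T2Space (BigB p a m dm) :=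
  inferInstanceAs (T2Space ((Option (Xfrak p m dm) →₀ ℕ) → Zq p a))

lemma st13_constCoeff {p : ℕ} [Fact p.Prime] (Ep : PowerSeries ℤ_[p])
    (hEp : IsArtinHasseZp p Ep) : PowerSeries.coeff (R := ℤ_[p]) 0 Ep = 1 := by
  have h0 : PowerSeries.coeff (R := ℚ) 0 (artinHasse p) = 1 := by
    simp [artinHasse, psComp, PowerSeries.coeff_mk, PowerSeries.coeff_exp]
  have h := congrArg (PowerSeries.coeff (R := ℚ_[p]) 0) hEp
  rw [PowerSeries.coeff_map, PowerSeries.coeff_map, h0, map_one] at h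
  have : PadicInt.Coe.ringHom (PowerSeries.coeff (R := ℤ_[p]) 0 Ep) = PadicInt.Coe.ringHom 1 := by
    rw [h, map_one]
  exact Subtype.coe_injective this

/-- Coefficients of a `psSubst`, by definition. -/
lemma st13_coeff_psSubst {σ A : Type*} [CommRing A] (g : MvPowerSeries σ A)
    (f : PowerSeries A) (u : σ →₀ ℕ) :
    MvPowerSeries.coeff (R := A) u (psSubst g f)
      = ∑ k ∈ Finset.range ((u.sum fun _ c => c) + 1),
          PowerSeries.coeff (R := A) k f * MvPowerSeries.coeff (R := A) u (g ^ k) := rfl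

/-- The shape of nonzero coefficients of a factor. -/
lemma st13_factor_shape (aa : Xfrak p m dm → GaloisField p a) (Ep : PowerSeries ℤ_[p])
    (x : Xfrak p m dm) (w : Option (Xfrak p m dm) →₀ ℕ)
    (hw : MvPowerSeries.coeff (R := Zq p a) w (EfFactor p a m dm aa Ep x) ≠ 0) :
    w = Finsupp.single (some x) (w (some x))
        + Finsupp.single none (x.1.2 * w (some x)) := by
  rw [EfFactor, st13_coeff_psSubst] at hw
  obtain ⟨k, -, hk⟩ := Finset.exists_ne_zero_of_sum_ne_zero hw
  have hgk : (MvPowerSeries.C (σ := Option (Xfrak p m dm)) (R := Zq p a)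
        (WittVector.teichmuller p (aa x))
      * MvPowerSeries.X (some x) * MvPowerSeries.X none ^ x.1.2) ^ k
    = MvPowerSeries.C (σ := Option (Xfrak p m dm)) (R := Zq p a)
        ((WittVector.teichmuller p (aa x)) ^ k)
      * MvPowerSeries.monomial (R := Zq p a)
          (Finsupp.single (some x) k + Finsupp.single none (x.1.2 * k)) 1 := by
    rw [mul_pow, mul_pow, ← pow_mul, MvPowerSeries.X_pow_eq, MvPowerSeries.X_pow_eq, mul_assoc,
      MvPowerSeries.monomial_mul_monomial, one_mul, ← map_pow, mul_comm x.1.2 k]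
  rw [hgk, MvPowerSeries.coeff_C_mul, MvPowerSeries.coeff_monomial] at hk
  have hwk : w = Finsupp.single (some x) k + Finsupp.single none (x.1.2 * k) := by
    by_contra hne
    rw [if_neg hne, mul_zero, mul_zero] at hk
    exact hk rfl
  have hxk : w (some x) = k := by
    rw [hwk]
    simp [Finsupp.single_apply]
  rw [hxk]; exact hwk

/-- The constant coefficient of a factor is 1. -/
lemma st13_factor_zero (aa : Xfrak p m dm → GaloisField p a) (Ep : PowerSeries ℤ_[p])
    (hEp : IsArtinHasseZp p Ep) (x : Xfrak p m dm) :
    MvPowerSeries.coeff (R := Zq p a) 0 (EfFactor p a m dm aa Ep x) = 1 := by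
  rw [EfFactor, st13_coeff_psSubst]
  rw [Finsupp.sum_zero_index, Finset.sum_range_one, pow_zero]
  rw [PowerSeries.coeff_map, st13_constCoeff Ep hEp, map_one]
  simp [MvPowerSeries.coeff_one]

/-- Absorption: multiplying by a factor whose variable is absent does not change a coefficient. -/
lemma st13_absorb (aa : Xfrak p m dm → GaloisField p a) (Ep : PowerSeries ℤ_[p])
    (hEp : IsArtinHasseZp p Ep) (y : Xfrak p m dm) (G : BigB p a m dm)
    (w : Option (Xfrak p m dm) →₀ ℕ) (hw : w (some y) = 0) :
    MvPowerSeries.coeff (R := Zq p a) w (EfFactor p a m dm aa Ep y * G)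
      = MvPowerSeries.coeff (R := Zq p a) w G := by
  rw [MvPowerSeries.coeff_mul, Finset.sum_eq_single ((0 : Option (Xfrak p m dm) →₀ ℕ), w)]
  · rw [st13_factor_zero p a m dm aa Ep hEp, one_mul]
  · rintro ⟨w1, w2⟩ hmem hne
    by_contra hterm
    have h1 : MvPowerSeries.coeff (R := Zq p a) w1 (EfFactor p a m dm aa Ep y) ≠ 0 :=
      left_ne_zero_of_mul hterm
    have hsh := st13_factor_shape p a m dm aa Ep y w1 h1
    have hadd : w1 + w2 = w := Finset.HasAntidiagonal.mem_antidiagonal.mp hmem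
    have h10 : w1 (some y) = 0 := by
      have := congrArg (fun f : Option (Xfrak p m dm) →₀ ℕ => f (some y)) hadd
      simp only [Finsupp.add_apply, hw] at this
      omega
    have hw1 : w1 = 0 := by rw [hsh, h10]; simp
    apply hne
    rw [hw1] at hadd
    rw [hw1, ← hadd, zero_add]
  · intro hmem
    exact absurd (Finset.HasAntidiagonal.mem_antidiagonal.mpr (zero_add w)) hmem

/-- Shape of nonzero coefficients of a finite product of factors. -/
lemma st13_prod_shape (aa : Xfrak p m dm → GaloisField p a) (Ep : PowerSeries ℤ_[p])
    (S : Finset (Xfrak p m dm)) :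
    ∀ w : Option (Xfrak p m dm) →₀ ℕ,
      MvPowerSeries.coeff (R := Zq p a) w (∏ x ∈ S, EfFactor p a m dm aa Ep x) ≠ 0 →
      (∀ x : Xfrak p m dm, x ∉ S → w (some x) = 0)
      ∧ w none = ∑ x ∈ S, x.1.2 * w (some x) := by
  induction S using Finset.induction_on with
  | empty =>
    intro w hw
    rw [Finset.prod_empty, MvPowerSeries.coeff_one] at hw
    have hw0 : w = 0 := by
      by_contra h; rw [if_neg h] at hw; exact hw rfl
    subst hw0
    simp
  | insert y S hy ih =>
    intro w hw
    rw [Finset.prod_insert hy, MvPowerSeries.coeff_mul] at hw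
    obtain ⟨⟨w1, w2⟩, hmem, hne0⟩ := Finset.exists_ne_zero_of_sum_ne_zero hw
    have h1 := left_ne_zero_of_mul hne0
    have h2 := right_ne_zero_of_mul hne0
    have hsh := st13_factor_shape p a m dm aa Ep y w1 h1
    obtain ⟨ih1, ih2⟩ := ih w2 h2
    have hadd : w1 + w2 = w := Finset.HasAntidiagonal.mem_antidiagonal.mp hmem
    have happ : ∀ o, w o = w1 o + w2 o := by
      intro o; rw [← hadd, Finsupp.add_apply]
    have hw1some : ∀ x : Xfrak p m dm, x ≠ y → w1 (some x) = 0 := by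
      intro x hx
      rw [hsh]
      simp only [Finsupp.add_apply, Finsupp.single_apply]
      rw [if_neg (fun h => hx (Option.some_injective _ h).symm), if_neg (by simp)]
      simp
    constructor
    · intro x hx
      have hxy : x ≠ y := fun h => hx (h ▸ Finset.mem_insert_self y S)
      have hxS : x ∉ S := fun h => hx (Finset.mem_insert_of_mem h)
      rw [happ, hw1some x hxy, ih1 x hxS]
    · rw [Finset.sum_insert hy, happ none]
      have e1 : w1 none = y.1.2 * w1 (some y) := by
        conv_lhs => rw [hsh]
        simp [Finsupp.single_apply]
      have e2 : w (some y) = w1 (some y) := by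
        rw [happ, ih1 y hy, add_zero]
      have e3 : ∑ x ∈ S, x.1.2 * w (some x) = ∑ x ∈ S, x.1.2 * w2 (some x) := by
        apply Finset.sum_congr rfl
        intro x hxS
        have hxy : x ≠ y := fun h => hy (h ▸ hxS)
        rw [happ, hw1some x hxy, zero_add]
      rw [e1, e2, ih2, e3]


/-- The finite set of π-variables occurring in an exponent `w`. -/
def st13_SW (w : Option (Xfrak p m dm) →₀ ℕ) : Finset (Xfrak p m dm) :=
  w.support.preimage some (Option.some_injective _).injOn

lemma st13_mem_SW (w : Option (Xfrak p m dm) →₀ ℕ) (x : Xfrak p m dm) :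
    x ∈ st13_SW p m dm w ↔ w (some x) ≠ 0 := by
  rw [st13_SW, Finset.mem_preimage, Finsupp.mem_support_iff]

/-- Stabilization of coefficients of partial products. -/
lemma st13_stable (aa : Xfrak p m dm → GaloisField p a) (Ep : PowerSeries ℤ_[p])
    (hEp : IsArtinHasseZp p Ep) (w : Option (Xfrak p m dm) →₀ ℕ)
    (S T : Finset (Xfrak p m dm)) (hS : ∀ x : Xfrak p m dm, w (some x) ≠ 0 → x ∈ S)
    (hST : S ⊆ T) :
    MvPowerSeries.coeff (R := Zq p a) w (∏ x ∈ T, EfFactor p a m dm aa Ep x)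
      = MvPowerSeries.coeff (R := Zq p a) w (∏ x ∈ S, EfFactor p a m dm aa Ep x) := by
  have key : ∀ (U : Finset (Xfrak p m dm)), (∀ x ∈ U, w (some x) = 0) →
      ∀ G : BigB p a m dm,
      MvPowerSeries.coeff (R := Zq p a) w ((∏ x ∈ U, EfFactor p a m dm aa Ep x) * G)
        = MvPowerSeries.coeff (R := Zq p a) w G := by
    intro U
    induction U using Finset.induction_on with
    | empty => intro _ G; rw [Finset.prod_empty, one_mul]
    | insert y U hy ih =>
      intro h G
      rw [Finset.prod_insert hy, mul_assoc,
        st13_absorb p a m dm aa Ep hEp y _ w (h y (Finset.mem_insert_self y U))]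
      exact ih (fun x hx => h x (Finset.mem_insert_of_mem hx)) G
  rw [← Finset.prod_sdiff hST]
  exact key (T \ S)
    (fun x hx => by_contra fun h => (Finset.mem_sdiff.mp hx).2 (hS x h)) _

/-- The limit of the partial products, coefficientwise. -/
def st13_L (aa : Xfrak p m dm → GaloisField p a) (Ep : PowerSeries ℤ_[p]) :
    BigB p a m dm :=
  fun w => MvPowerSeries.coeff (R := Zq p a) w
    (∏ x ∈ st13_SW p m dm w, EfFactor p a m dm aa Ep x)

lemma st13_hasProd (aa : Xfrak p m dm → GaloisField p a) (Ep : PowerSeries ℤ_[p])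
    (hEp : IsArtinHasseZp p Ep) :
    HasProd (EfFactor p a m dm aa Ep) (st13_L p a m dm aa Ep) := by
  rw [HasProd]
  rw [SummationFilter.unconditional_filter]
  refine tendsto_pi_nhds.mpr ?_
  intro w
  rw [nhds_discrete, Filter.tendsto_pure]
  rw [Filter.eventually_atTop]
  refine ⟨st13_SW p m dm w, fun T hT => ?_⟩
  exact st13_stable p a m dm aa Ep hEp w _ T
    (fun x hx => (st13_mem_SW p m dm w x).mpr hx) hT

lemma st13_Ef_eq (aa : Xfrak p m dm → GaloisField p a) (Ep : PowerSeries ℤ_[p])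
    (hEp : IsArtinHasseZp p Ep) :
    Ef p a m dm aa Ep = st13_L p a m dm aa Ep :=
  (st13_hasProd p a m dm aa Ep hEp).tprod_eq

/-- Every monomial occurring in η_k has weight exactly k. -/
lemma st13_weight (aa : Xfrak p m dm → GaloisField p a) (Ep : PowerSeries ℤ_[p])
    (hEp : IsArtinHasseZp p Ep) (k : ℕ) (u : Xfrak p m dm →₀ ℕ)
    (hu : MvPowerSeries.coeff (R := Zq p a) u (xCoeff p a m dm (Ef p a m dm aa Ep) k) ≠ 0) :
    (u.sum fun x c => x.1.2 * c) = k := by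
  set idx : Option (Xfrak p m dm) →₀ ℕ :=
    Finsupp.mapDomain some u + Finsupp.single none k with hidx
  have hcoeff : MvPowerSeries.coeff (R := Zq p a) u (xCoeff p a m dm (Ef p a m dm aa Ep) k)
      = MvPowerSeries.coeff (R := Zq p a) idx (Ef p a m dm aa Ep) := rfl
  rw [hcoeff, st13_Ef_eq p a m dm aa Ep hEp] at hu
  have hu' : MvPowerSeries.coeff (R := Zq p a) idx
      (∏ x ∈ st13_SW p m dm idx, EfFactor p a m dm aa Ep x) ≠ 0 := hu
  obtain ⟨-, hsum⟩ := st13_prod_shape p a m dm aa Ep _ idx hu'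
  have hnone : idx none = k := by
    rw [hidx]
    rw [Finsupp.add_apply, Finsupp.mapDomain_notin_range _ _ (by simp),
      Finsupp.single_apply, if_pos rfl, zero_add]
  have hsome : ∀ x : Xfrak p m dm, idx (some x) = u x := by
    intro x
    rw [hidx, Finsupp.add_apply, Finsupp.mapDomain_apply (Option.some_injective _),
      Finsupp.single_apply, if_neg (by simp), add_zero]
  have hsupp : st13_SW p m dm idx = u.support := by
    ext x
    rw [st13_mem_SW, hsome, Finsupp.mem_support_iff]
  rw [hnone, hsupp] at hsum
  rw [Finsupp.sum, hsum]
  exact Finset.sum_congr rfl fun x _ => by rw [hsome]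


/-- the family `(E(π_{(i,j)}·[a_{ij}]·X^j))_{(i,j)∈𝔛}` is multipliable in
`R'[[X]]` for the coefficient-wise topology; writing
`E_f = ∏ E(π_{(i,j)}·[a_{ij}]·X^j) = ∑_k η_k X^k` with `η_k ∈ R'`, one has
`v(η_k) ∈ {k/δ, ∞}` for every `k`; in particular `v(η_k) → ∞` as `k → ∞`. -/
theorem statement13 (ha : 1 ≤ a) (hdm : 1 ≤ dm) (hpdm : ¬ p ∣ dm)
    (aa : Xfrak p m dm → GaloisField p a)
    (Ep : PowerSeries ℤ_[p]) (hEp : IsArtinHasseZp p Ep) :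
    Multipliable (EfFactor p a m dm aa Ep)
    ∧ (∀ k : ℕ,
        vR p m dm (xCoeff p a m dm (Ef p a m dm aa Ep) k)
            = (((k : ℚ) * (p : ℚ) ^ m / (dm : ℚ) : ℚ) : WithTop ℚ)
        ∨ vR p m dm (xCoeff p a m dm (Ef p a m dm aa Ep) k) = ⊤)
    ∧ (∀ N : ℚ, ∃ K0 : ℕ, ∀ k : ℕ, K0 ≤ k →
        (N : WithTop ℚ) ≤ vR p m dm (xCoeff p a m dm (Ef p a m dm aa Ep) k)) := by

  have hmult : Multipliable (EfFactor p a m dm aa Ep) :=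
    ⟨st13_L p a m dm aa Ep, st13_hasProd p a m dm aa Ep hEp⟩
  have key : ∀ k : ℕ,
      vR p m dm (xCoeff p a m dm (Ef p a m dm aa Ep) k)
          = (((k : ℚ) * (p : ℚ) ^ m / (dm : ℚ) : ℚ) : WithTop ℚ)
      ∨ vR p m dm (xCoeff p a m dm (Ef p a m dm aa Ep) k) = ⊤ := by
    intro k
    by_cases hr : xCoeff p a m dm (Ef p a m dm aa Ep) k = 0
    · right; rw [vR, if_pos hr]
    · left
      rw [vR, if_neg hr]
      obtain ⟨u, hu⟩ : ∃ u : Xfrak p m dm →₀ ℕ,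
          MvPowerSeries.coeff (R := Zq p a) u (xCoeff p a m dm (Ef p a m dm aa Ep) k) ≠ 0 := by
        by_contra h
        push_neg at h
        exact hr (MvPowerSeries.ext fun u => by rw [h u, map_zero])
      have hset : {w : ℕ | ∃ u : (Xfrak p m dm) →₀ ℕ,
          MvPowerSeries.coeff (R := Zq p a) u (xCoeff p a m dm (Ef p a m dm aa Ep) k) ≠ 0
            ∧ w = u.sum fun x c => x.1.2 * c} = {k} := by
        ext w
        rw [Set.mem_singleton_iff]
        constructor
        · rintro ⟨u', hu', rfl⟩
          exact st13_weight p a m dm aa Ep hEp k u' hu'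
        · intro hw
          exact ⟨u, hu, hw.trans (st13_weight p a m dm aa Ep hEp k u hu).symm⟩
      rw [hset, csInf_singleton]
  refine ⟨hmult, key, fun N => ?_⟩
  refine ⟨⌈N * dm⌉₊, fun k hk => ?_⟩
  rcases key k with h | h
  · rw [h]
    have hdm0 : (0 : ℚ) < dm := by exact_mod_cast hdm
    have h1 : N * dm ≤ (k : ℚ) := by
      calc N * dm ≤ (⌈N * dm⌉₊ : ℚ) := Nat.le_ceil _
        _ ≤ (k : ℚ) := by exact_mod_cast hk
    have h2 : (k : ℚ) ≤ (k : ℚ) * (p : ℚ) ^ m := by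
      refine le_mul_of_one_le_right (by positivity) ?_
      have hp1 : (1 : ℚ) ≤ (p : ℚ) := by
        exact_mod_cast (Fact.out : p.Prime).one_lt.le
      exact one_le_pow₀ hp1
    have : N ≤ (k : ℚ) * (p : ℚ) ^ m / dm := by
      rw [le_div_iff₀ hdm0]
      exact h1.trans h2
    exact_mod_cast WithTop.coe_le_coe.mpr this
  · rw [h]; exact le_top

end
end

section
/- For every integer n ≥ 1 and every r ∈ R one has v_{π_n}(ev_n(r)) ≥ v(r). -/
open PowerSeries

noncomputable section

open scoped Classical

/-- The property that `πfam i` is the power series `π_i(T) ∈ T·ℤ_p[[T]]` with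
`E(π_i(T)) = (1+T)^{p^i}`. -/
def IsPiFamily (p : ℕ) [Fact p.Prime] (Ep : PowerSeries ℤ_[p])
    (πfam : ℕ → PowerSeries ℤ_[p]) : Prop :=
  ∀ i : ℕ, PowerSeries.constantCoeff (πfam i) = 0
    ∧ psComp (πfam i) Ep = (1 + X) ^ p ^ i

/-- The convergent evaluation π_i(π_n) ∈ 𝒪_n ⊆ K_n at π_n = ζ_{p^n} − 1. -/
def piEval (p : ℕ) [Fact p.Prime] (πfam : ℕ → PowerSeries ℤ_[p])
    (K : Type*) [NormedField K] [Algebra ℚ_[p] K] (ζ : K) (i : ℕ) : K :=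
  ∑' j : ℕ,
    algebraMap ℚ_[p] K (PadicInt.Coe.ringHom (PowerSeries.coeff j (πfam i))) * (ζ - 1) ^ j

/-- The evaluation map ev_n : R → 𝒪_n, the ℤ_p-algebra homomorphism determined by
π_{(i,j)} ↦ π_i(π_n), given by the convergent sum over all monomials. -/
def evn (p m dm : ℕ) [Fact p.Prime] (πfam : ℕ → PowerSeries ℤ_[p])
    (K : Type*) [NormedField K] [Algebra ℚ_[p] K] (ζ : K)
    (r : MvPowerSeries (Xfrak p m dm) ℤ_[p]) : K :=
  ∑' u : (Xfrak p m dm) →₀ ℕ,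
    algebraMap ℚ_[p] K (PadicInt.Coe.ringHom (MvPowerSeries.coeff u r))
      * (u.prod fun x k => (piEval p πfam K ζ x.1.1) ^ k)

/-- The normalization v_{π_n} = p^{n−1}(p−1)·v_p, so that v_{π_n}(π_n) = 1. -/
def vpin (p n : ℕ) {K : Type*} (v : K → WithTop ℚ) (y : K) : WithTop ℚ :=
  (((p : ℚ) ^ (n - 1) * ((p : ℚ) - 1) : ℚ) : WithTop ℚ) * v y

namespace St15

variable {R : Type*} [CommRing R]

lemma coeff_psComp (g f : PowerSeries R) (n : ℕ) :
    PowerSeries.coeff n (psComp g f)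
      = ∑ k ∈ Finset.range (n + 1),
          PowerSeries.coeff k f * PowerSeries.coeff n (g ^ k) := by
  simp [psComp, PowerSeries.coeff_mk]

lemma X_pow_dvd_sub_trunc (f : PowerSeries R) (N : ℕ) :
    (X : PowerSeries R) ^ N ∣ f - ((PowerSeries.trunc N f : Polynomial R) : PowerSeries R) := by
  rw [PowerSeries.X_pow_dvd_iff]
  intro d hd
  simp [Polynomial.coeff_coe, PowerSeries.coeff_trunc, hd]

lemma X_pow_dvd_pow_sub_pow {x y : PowerSeries R} {a : ℕ}
    (h : (X : PowerSeries R) ^ a ∣ x - y) (k : ℕ) :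
    (X : PowerSeries R) ^ a ∣ x ^ k - y ^ k := by
  have := geom_sum₂_mul x y k
  rw [← this]
  exact Dvd.dvd.mul_left h _

lemma X_pow_dvd_aeval_sub {P : Polynomial R} {x y : PowerSeries R} {a : ℕ}
    (h : (X : PowerSeries R) ^ a ∣ x - y) :
    (X : PowerSeries R) ^ a ∣ Polynomial.aeval x P - Polynomial.aeval y P := by
  induction P using Polynomial.induction_on' with
  | add p q hp hq =>
      rw [map_add, map_add]
      have : Polynomial.aeval x p + Polynomial.aeval x q - (Polynomial.aeval y p + Polynomial.aeval y q)
          = (Polynomial.aeval x p - Polynomial.aeval y p) + (Polynomial.aeval x q - Polynomial.aeval y q) := by ring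
      rw [this]; exact dvd_add hp hq
  | monomial k c =>
      rw [Polynomial.aeval_monomial, Polynomial.aeval_monomial, ← mul_sub]
      exact Dvd.dvd.mul_left (X_pow_dvd_pow_sub_pow h k) _

lemma coeff_aeval_eq_zero {x : PowerSeries R} (hx : PowerSeries.constantCoeff x = 0)
    {P : Polynomial R} {N : ℕ} (h : ∀ k ≤ N, P.coeff k = 0) :
    PowerSeries.coeff N (Polynomial.aeval x P) = 0 := by
  obtain ⟨Q, hQ⟩ : (Polynomial.X : Polynomial R) ^ (N + 1) ∣ P := by
    rw [Polynomial.X_pow_dvd_iff]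
    intro d hd; exact h d (Nat.lt_succ_iff.mp hd)
  have : (X : PowerSeries R) ^ (N + 1) ∣ Polynomial.aeval x P := by
    rw [hQ, map_mul, map_pow, Polynomial.aeval_X]
    exact Dvd.dvd.mul_right (pow_dvd_pow_of_dvd (PowerSeries.X_dvd_iff.mpr hx) _) _
  rw [PowerSeries.X_pow_dvd_iff] at this
  exact this N (Nat.lt_succ_self N)

lemma coeff_aeval_congr {x : PowerSeries R} (hx : PowerSeries.constantCoeff x = 0)
    {P Q : Polynomial R} {N : ℕ} (h : ∀ k ≤ N, P.coeff k = Q.coeff k) :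
    PowerSeries.coeff N (Polynomial.aeval x P) = PowerSeries.coeff N (Polynomial.aeval x Q) := by
  have h0 : PowerSeries.coeff N (Polynomial.aeval x (P - Q)) = 0 :=
    coeff_aeval_eq_zero hx (fun k hk => by simp [Polynomial.coeff_sub, h k hk])
  rw [map_sub, map_sub] at h0
  exact sub_eq_zero.mp h0

end St15

namespace St15
variable {R : Type*} [CommRing R]

lemma aeval_trunc_eq_sum (x f : PowerSeries R) (N : ℕ) :
    Polynomial.aeval x (PowerSeries.trunc (N+1) f)
      = ∑ k ∈ Finset.range (N + 1), PowerSeries.C (PowerSeries.coeff k f) * x ^ k := by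
  rw [Polynomial.aeval_def,
    Polynomial.eval₂_eq_sum_range' (algebraMap R (PowerSeries R)) (natDegree_trunc_lt f N) x]
  refine Finset.sum_congr rfl (fun k hk => ?_)
  rw [Finset.mem_range] at hk
  rw [PowerSeries.coeff_trunc, if_pos hk, PowerSeries.algebraMap_apply]
  simp

/-- Lemma A -/
lemma coeff_psComp_eq_aeval (g f : PowerSeries R) (N : ℕ) :
    PowerSeries.coeff N (psComp g f)
      = PowerSeries.coeff N (Polynomial.aeval g (PowerSeries.trunc (N+1) f)) := by
  rw [coeff_psComp, aeval_trunc_eq_sum, map_sum]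
  refine Finset.sum_congr rfl (fun k _ => ?_)
  rw [PowerSeries.coeff_C_mul]

lemma coeff_pow_eq_zero_of_lt {g : PowerSeries R} (hg : PowerSeries.constantCoeff g = 0)
    {N k : ℕ} (h : N < k) : PowerSeries.coeff N (g ^ k) = 0 := by
  have : (X : PowerSeries R) ^ k ∣ g ^ k :=
    pow_dvd_pow_of_dvd (PowerSeries.X_dvd_iff.mpr hg) _
  rw [PowerSeries.X_pow_dvd_iff] at this
  exact this N h

/-- Lemma B -/
lemma coeff_psComp_eq_aeval_of_le {g : PowerSeries R}
    (hg : PowerSeries.constantCoeff g = 0) (f : PowerSeries R) {M N : ℕ} (hMN : M ≤ N) :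
    PowerSeries.coeff M (psComp g f)
      = PowerSeries.coeff M (Polynomial.aeval g (PowerSeries.trunc (N+1) f)) := by
  rw [coeff_psComp_eq_aeval g f M]
  refine coeff_aeval_congr hg (fun k hk => ?_)
  rw [PowerSeries.coeff_trunc, PowerSeries.coeff_trunc,
    if_pos (Nat.lt_succ_of_le hk), if_pos (Nat.lt_succ_of_le (hk.trans hMN))]

lemma psComp_add (g f₁ f₂ : PowerSeries R) :
    psComp g (f₁ + f₂) = psComp g f₁ + psComp g f₂ := by
  ext N
  rw [map_add, coeff_psComp, coeff_psComp, coeff_psComp, ← Finset.sum_add_distrib]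
  refine Finset.sum_congr rfl (fun k _ => ?_)
  rw [map_add, add_mul]

lemma psComp_one (g : PowerSeries R) : psComp g (1 : PowerSeries R) = 1 := by
  ext N
  rw [coeff_psComp]
  rw [Finset.sum_eq_single 0]
  · simp
  · intro k _ hk
    rw [PowerSeries.coeff_one, if_neg hk, zero_mul]
  · intro h; simp at h

lemma psComp_X {g : PowerSeries R} (hg : PowerSeries.constantCoeff g = 0) :
    psComp g (X : PowerSeries R) = g := by
  ext N
  rw [coeff_psComp]
  rcases Nat.eq_zero_or_pos N with hN | hN
  · subst hN
    simp [PowerSeries.coeff_zero_eq_constantCoeff, hg]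
  · rw [Finset.sum_eq_single 1]
    · simp
    · intro k _ hk
      rw [PowerSeries.coeff_X, if_neg hk, zero_mul]
    · intro h
      rw [Finset.mem_range] at h
      omega

lemma psComp_mul {g : PowerSeries R} (hg : PowerSeries.constantCoeff g = 0)
    (f₁ f₂ : PowerSeries R) :
    psComp g (f₁ * f₂) = psComp g f₁ * psComp g f₂ := by
  ext N
  rw [coeff_psComp_eq_aeval]
  have step1 : PowerSeries.coeff N (Polynomial.aeval g (PowerSeries.trunc (N+1) (f₁ * f₂)))
      = PowerSeries.coeff N (Polynomial.aeval g
          (PowerSeries.trunc (N+1) f₁ * PowerSeries.trunc (N+1) f₂)) := by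
    refine coeff_aeval_congr hg (fun k hk => ?_)
    have h1 : (PowerSeries.trunc (N+1) f₁ * PowerSeries.trunc (N+1) f₂).coeff k
        = PowerSeries.coeff k
            (((PowerSeries.trunc (N+1) f₁ : Polynomial R) : PowerSeries R)
              * ((PowerSeries.trunc (N+1) f₂ : Polynomial R) : PowerSeries R)) := by
      rw [← Polynomial.coe_mul, Polynomial.coeff_coe]
    have h2 : PowerSeries.coeff k
            (((PowerSeries.trunc (N+1) f₁ : Polynomial R) : PowerSeries R)
              * ((PowerSeries.trunc (N+1) f₂ : Polynomial R) : PowerSeries R))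
        = PowerSeries.coeff k (f₁ * f₂) := by
      have hd : (X : PowerSeries R) ^ (N+1) ∣ f₁ * f₂
          - ((PowerSeries.trunc (N+1) f₁ : Polynomial R) : PowerSeries R)
              * ((PowerSeries.trunc (N+1) f₂ : Polynomial R) : PowerSeries R) := by
        have e : f₁ * f₂
            - ((PowerSeries.trunc (N+1) f₁ : Polynomial R) : PowerSeries R)
                * ((PowerSeries.trunc (N+1) f₂ : Polynomial R) : PowerSeries R)
            = f₁ * (f₂ - ((PowerSeries.trunc (N+1) f₂ : Polynomial R) : PowerSeries R))
              + (f₁ - ((PowerSeries.trunc (N+1) f₁ : Polynomial R) : PowerSeries R))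
                * ((PowerSeries.trunc (N+1) f₂ : Polynomial R) : PowerSeries R) := by ring
        rw [e]
        exact dvd_add (Dvd.dvd.mul_left (X_pow_dvd_sub_trunc f₂ (N+1)) _)
          (Dvd.dvd.mul_right (X_pow_dvd_sub_trunc f₁ (N+1)) _)
      rw [PowerSeries.X_pow_dvd_iff] at hd
      have := hd k (Nat.lt_succ_of_le hk)
      rw [map_sub, sub_eq_zero] at this
      exact this.symm
    rw [PowerSeries.coeff_trunc, if_pos (Nat.lt_succ_of_le hk), h1, h2]
  rw [step1, map_mul, PowerSeries.coeff_mul, PowerSeries.coeff_mul]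
  refine Finset.sum_congr rfl (fun ab hab => ?_)
  rw [Finset.HasAntidiagonal.mem_antidiagonal] at hab
  rw [coeff_psComp_eq_aeval_of_le hg f₁ (le_of_add_le_left hab.le),
      coeff_psComp_eq_aeval_of_le hg f₂ (le_of_add_le_right hab.le)]

lemma psComp_pow {g : PowerSeries R} (hg : PowerSeries.constantCoeff g = 0)
    (f : PowerSeries R) (k : ℕ) :
    psComp g (f ^ k) = psComp g f ^ k := by
  induction k with
  | zero => simpa using psComp_one g
  | succ k ih => rw [pow_succ, pow_succ, psComp_mul hg, ih]

lemma psComp_one_add_X_pow {g : PowerSeries R} (hg : PowerSeries.constantCoeff g = 0) (M : ℕ) :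
    psComp g ((1 + X : PowerSeries R) ^ M) = (1 + g) ^ M := by
  rw [psComp_pow hg, psComp_add, psComp_one, psComp_X hg]

end St15

namespace St15
variable {R : Type*} [CommRing R]

/-- associativity: `f(h)(g) = f(h(g))` -/
lemma psComp_assoc {g h : PowerSeries R}
    (hg : PowerSeries.constantCoeff g = 0) (hh : PowerSeries.constantCoeff h = 0)
    (f : PowerSeries R) :
    psComp g (psComp h f) = psComp (psComp g h) f := by
  ext N
  set P := PowerSeries.trunc (N+1) f with hP
  set H := PowerSeries.trunc (N+1) h with hH
  have coeH : ∀ k ≤ N, PowerSeries.coeff k ((H : PowerSeries R)) = PowerSeries.coeff k h := by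
    intro k hk
    rw [Polynomial.coeff_coe, PowerSeries.coeff_trunc, if_pos (Nat.lt_succ_of_le hk)]
  -- step 2 preliminaries
  have hHh : (X : PowerSeries R) ^ (N+1) ∣ (H : PowerSeries R) - h := by
    rw [PowerSeries.X_pow_dvd_iff]
    intro d hd
    rw [map_sub, coeH d (Nat.lt_succ_iff.mp hd), sub_self]
  have hcoe : ((Polynomial.aeval H P : Polynomial R) : PowerSeries R)
      = Polynomial.aeval ((H : PowerSeries R)) P := by
    have key := (Polynomial.aeval_algHom_apply (Polynomial.coeToPowerSeries.algHom (A := R)) H P).symm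
    simpa [Polynomial.coeToPowerSeries.algHom_apply, Algebra.algebraMap_self,
      PowerSeries.map_id] using key
  have step2 : PowerSeries.coeff N (Polynomial.aeval g (PowerSeries.trunc (N+1) (psComp h f)))
      = PowerSeries.coeff N (Polynomial.aeval g (Polynomial.aeval H P)) := by
    refine coeff_aeval_congr hg (fun k hk => ?_)
    rw [PowerSeries.coeff_trunc, if_pos (Nat.lt_succ_of_le hk)]
    rw [← Polynomial.coeff_coe, hcoe]
    have hdiff := X_pow_dvd_aeval_sub (P := P) hHh
    rw [PowerSeries.X_pow_dvd_iff] at hdiff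
    have := hdiff k (Nat.lt_succ_of_le hk)
    rw [map_sub, sub_eq_zero] at this
    rw [this]
    exact coeff_psComp_eq_aeval_of_le hh f hk
  have step3 : Polynomial.aeval g (Polynomial.aeval H P)
      = Polynomial.aeval (Polynomial.aeval g H) P :=
    (Polynomial.aeval_algHom_apply (Polynomial.aeval g : Polynomial R →ₐ[R] PowerSeries R) H P).symm
  have step4 : PowerSeries.coeff N (Polynomial.aeval (Polynomial.aeval g H) P)
      = PowerSeries.coeff N (Polynomial.aeval (psComp g h) P) := by
    have hdvd : (X : PowerSeries R) ^ (N+1) ∣ Polynomial.aeval g H - psComp g h := by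
      rw [PowerSeries.X_pow_dvd_iff]
      intro d hd
      rw [map_sub, ← coeff_psComp_eq_aeval_of_le hg h (Nat.lt_succ_iff.mp hd), sub_self]
    have hdiff := X_pow_dvd_aeval_sub (P := P) hdvd
    rw [PowerSeries.X_pow_dvd_iff] at hdiff
    have := hdiff N (Nat.lt_succ_self N)
    rw [map_sub, sub_eq_zero] at this
    exact this
  rw [coeff_psComp_eq_aeval, step2, step3, step4, ← coeff_psComp_eq_aeval]

lemma constantCoeff_psComp {g h : PowerSeries R} (hh : PowerSeries.constantCoeff h = 0) :
    PowerSeries.constantCoeff (psComp g h) = 0 := by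
  rw [← PowerSeries.coeff_zero_eq_constantCoeff, coeff_psComp]
  simp [PowerSeries.coeff_zero_eq_constantCoeff, hh]

lemma coeff_pow_congr {a b : PowerSeries R}
    (ha : PowerSeries.constantCoeff a = 0) (hb : PowerSeries.constantCoeff b = 0)
    {N k : ℕ} (hk : 2 ≤ k) (hd : ∀ d, d < N → PowerSeries.coeff d a = PowerSeries.coeff d b) :
    PowerSeries.coeff N (a ^ k) = PowerSeries.coeff N (b ^ k) := by
  have hXN : (X : PowerSeries R) ^ N ∣ a - b := by
    rw [PowerSeries.X_pow_dvd_iff]; intro d hdN; rw [map_sub, hd d hdN, sub_self]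
  have hgeom : (X : PowerSeries R) ∣ ∑ i ∈ Finset.range k, a ^ i * b ^ (k - 1 - i) := by
    rw [PowerSeries.X_dvd_iff, map_sum]
    refine Finset.sum_eq_zero (fun i hi => ?_)
    rw [map_mul, map_pow, map_pow, ha, hb]
    rcases Nat.eq_zero_or_pos i with hi0 | hi0
    · subst hi0
      rw [pow_zero, one_mul, zero_pow (by omega)]
    · rw [zero_pow (by omega), zero_mul]
  have : (X : PowerSeries R) ^ (N + 1) ∣ a ^ k - b ^ k := by
    rw [← geom_sum₂_mul a b k, pow_succ']
    exact mul_dvd_mul hgeom hXN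
  rw [PowerSeries.X_pow_dvd_iff] at this
  have := this N (Nat.lt_succ_self N)
  rw [map_sub, sub_eq_zero] at this
  exact this

/-- injectivity of composition with `E` when `coeff 1 E` = 1 -/
lemma psComp_inj {E a b : PowerSeries R} (hE1 : PowerSeries.coeff 1 E = 1)
    (ha : PowerSeries.constantCoeff a = 0) (hb : PowerSeries.constantCoeff b = 0)
    (h : psComp a E = psComp b E) : a = b := by
  ext N
  induction N using Nat.strong_induction_on with
  | _ N IH =>
  rcases Nat.eq_zero_or_pos N with hN | hN
  · subst hN; rw [PowerSeries.coeff_zero_eq_constantCoeff, ha, hb]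
  have hc := congrArg (PowerSeries.coeff N) h
  rw [coeff_psComp, coeff_psComp] at hc
  have hterm : ∀ k ∈ Finset.range (N+1), k ≠ 1 →
      PowerSeries.coeff k E * PowerSeries.coeff N (a ^ k)
        = PowerSeries.coeff k E * PowerSeries.coeff N (b ^ k) := by
    intro k _ hk1
    rcases Nat.eq_zero_or_pos k with hk0 | hk0
    · subst hk0; simp
    · have hk2 : 2 ≤ k := by omega
      rw [coeff_pow_congr ha hb hk2 (fun d hdN => IH d hdN)]
  have h1 : PowerSeries.coeff 1 E * PowerSeries.coeff N (a ^ 1)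
      = PowerSeries.coeff 1 E * PowerSeries.coeff N (b ^ 1) := by
    have hmem : (1 : ℕ) ∈ Finset.range (N+1) := Finset.mem_range.mpr (by omega)
    have ha' := Finset.add_sum_erase (Finset.range (N+1))
      (fun k => PowerSeries.coeff k E * PowerSeries.coeff N (a ^ k)) hmem
    have hb' := Finset.add_sum_erase (Finset.range (N+1))
      (fun k => PowerSeries.coeff k E * PowerSeries.coeff N (b ^ k)) hmem
    calc PowerSeries.coeff 1 E * PowerSeries.coeff N (a ^ 1)
        = (∑ k ∈ Finset.range (N+1), PowerSeries.coeff k E * PowerSeries.coeff N (a ^ k))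
          - ∑ k ∈ (Finset.range (N+1)).erase 1, PowerSeries.coeff k E * PowerSeries.coeff N (a ^ k) := by
          rw [← ha']; ring
      _ = (∑ k ∈ Finset.range (N+1), PowerSeries.coeff k E * PowerSeries.coeff N (b ^ k))
          - ∑ k ∈ (Finset.range (N+1)).erase 1, PowerSeries.coeff k E * PowerSeries.coeff N (b ^ k) := by
          rw [hc]
          congr 1
          refine Finset.sum_congr rfl (fun k hk => ?_)
          exact hterm k (Finset.mem_of_mem_erase hk) (Finset.ne_of_mem_erase hk)
      _ = PowerSeries.coeff 1 E * PowerSeries.coeff N (b ^ 1) := by rw [← hb']; ring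
  rw [hE1, one_mul, one_mul, pow_one, pow_one] at h1
  exact h1

lemma map_psComp {S : Type*} [CommRing S] (φ : R →+* S) (g f : PowerSeries R) :
    PowerSeries.map φ (psComp g f) = psComp (PowerSeries.map φ g) (PowerSeries.map φ f) := by
  ext N
  rw [PowerSeries.coeff_map, coeff_psComp, coeff_psComp, map_sum]
  refine Finset.sum_congr rfl (fun k _ => ?_)
  rw [map_mul, PowerSeries.coeff_map, ← map_pow, PowerSeries.coeff_map]

end St15

namespace St15

lemma coeff_artinHasse_zero (p : ℕ) : PowerSeries.coeff 0 (artinHasse p) = 1 := by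
  rw [artinHasse, coeff_psComp]
  simp [PowerSeries.coeff_zero_eq_constantCoeff, PowerSeries.constantCoeff_exp]

lemma coeff_artinHasse_one (p : ℕ) : PowerSeries.coeff 1 (artinHasse p) = 1 := by
  rw [artinHasse, coeff_psComp]
  have h0 : PowerSeries.coeff 0 (PowerSeries.exp ℚ) * PowerSeries.coeff 1 ((lseries p) ^ 0) = 0 := by
    simp
  have h1 : PowerSeries.coeff 1 (PowerSeries.exp ℚ) * PowerSeries.coeff 1 ((lseries p) ^ 1) = 1 := by
    rw [PowerSeries.coeff_exp, pow_one, lseries, PowerSeries.coeff_mk, if_pos ⟨0, (pow_zero p).symm⟩]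
    norm_num
  rw [Finset.sum_range_succ, Finset.sum_range_one, h0, h1, zero_add]

variable {p : ℕ} [Fact p.Prime]

lemma coeff_Ep {Ep : PowerSeries ℤ_[p]} (hEp : IsArtinHasseZp p Ep) (j : ℕ) :
    ((PowerSeries.coeff j Ep : ℤ_[p]) : ℚ_[p]) = ((PowerSeries.coeff j (artinHasse p) : ℚ) : ℚ_[p]) := by
  have := congrArg (PowerSeries.coeff j) hEp
  rwa [PowerSeries.coeff_map, PowerSeries.coeff_map] at this

lemma coeff_Ep_zero {Ep : PowerSeries ℤ_[p]} (hEp : IsArtinHasseZp p Ep) :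
    PowerSeries.coeff 0 Ep = 1 := by
  have := coeff_Ep hEp 0
  rw [coeff_artinHasse_zero] at this
  exact_mod_cast Subtype.coe_injective (by simpa using this)

lemma coeff_Ep_one {Ep : PowerSeries ℤ_[p]} (hEp : IsArtinHasseZp p Ep) :
    PowerSeries.coeff 1 Ep = 1 := by
  have := coeff_Ep hEp 1
  rw [coeff_artinHasse_one] at this
  exact_mod_cast Subtype.coe_injective (by simpa using this)

end St15

namespace St15
variable {p : ℕ} [Fact p.Prime]

instance charP_powerSeries_zmod : CharP (PowerSeries (ZMod p)) p := by
  refine charP_of_injective_ringHom (f := (PowerSeries.C : ZMod p →+* PowerSeries (ZMod p))) ?_ p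
  intro a b hab
  simpa using congrArg (PowerSeries.constantCoeff) hab

lemma pow_coeff_zmod_zero {i : ℕ} {f : PowerSeries (ZMod p)}
    (h0 : PowerSeries.constantCoeff f = 0)
    (H : ∀ l : ℕ, ¬ p ^ i ∣ l → PowerSeries.coeff l f = 0) :
    ∀ (k b : ℕ), ¬ p ^ i ∣ b → PowerSeries.coeff b (f ^ k) = 0 := by
  intro k
  induction k with
  | zero =>
      intro b hb
      have hb0 : b ≠ 0 := fun h => hb (h ▸ dvd_zero _)
      rw [pow_zero, PowerSeries.coeff_one, if_neg hb0]
  | succ k ih =>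
      intro b hb
      rw [pow_succ, mul_comm, PowerSeries.coeff_mul]
      refine Finset.sum_eq_zero (fun ab hab => ?_)
      rw [Finset.HasAntidiagonal.mem_antidiagonal] at hab
      by_cases hx : p ^ i ∣ ab.1
      · have : ¬ p ^ i ∣ ab.2 := by
          intro h2; exact hb (hab ▸ dvd_add hx h2)
        rw [ih ab.2 this, mul_zero]
      · rw [H ab.1 hx, zero_mul]

/-- Key mod-p structure of πfam. -/
lemma coeff_pifam_modp {Ep : PowerSeries ℤ_[p]} (hEp : IsArtinHasseZp p Ep)
    {πfam : ℕ → PowerSeries ℤ_[p]} (hπ : IsPiFamily p Ep πfam) (i : ℕ) :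
    ∀ j : ℕ, ¬ p ^ i ∣ j → PadicInt.toZMod (PowerSeries.coeff j (πfam i)) = 0 := by
  set φ : ℤ_[p] →+* ZMod p := PadicInt.toZMod
  set πb : PowerSeries (ZMod p) := PowerSeries.map φ (πfam i) with hπb
  set Eb : PowerSeries (ZMod p) := PowerSeries.map φ Ep with hEb
  have hπb0 : PowerSeries.constantCoeff πb = 0 := by
    rw [hπb, ← PowerSeries.coeff_zero_eq_constantCoeff, PowerSeries.coeff_map,
      PowerSeries.coeff_zero_eq_constantCoeff, (hπ i).1, map_zero]
  have hEb1 : PowerSeries.coeff 1 Eb = 1 := by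
    rw [hEb, PowerSeries.coeff_map, coeff_Ep_one hEp, map_one]
  have eq1 : psComp πb Eb = 1 + X ^ p ^ i := by
    rw [hπb, hEb, ← map_psComp, (hπ i).2, map_pow, map_add, map_one, PowerSeries.map_X]
    rw [add_pow_char_pow (1 : PowerSeries (ZMod p)) X p i, one_pow]
  suffices hsuff : ∀ j : ℕ, ¬ p ^ i ∣ j → PowerSeries.coeff j πb = 0 by
    intro j hj
    have := hsuff j hj
    rwa [hπb, PowerSeries.coeff_map] at this
  intro j
  induction j using Nat.strong_induction_on with
  | _ j IH =>
  intro hj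
  have hj0 : j ≠ 0 := fun h => hj (h ▸ dvd_zero _)
  -- the truncated series
  set fps : PowerSeries (ZMod p) := ((PowerSeries.trunc j πb : Polynomial (ZMod p)) : PowerSeries (ZMod p)) with hfps
  have hfps_coeff : ∀ l : ℕ, PowerSeries.coeff l fps
      = if l < j then PowerSeries.coeff l πb else 0 := by
    intro l
    rw [hfps, Polynomial.coeff_coe, PowerSeries.coeff_trunc]
  have hfps0 : PowerSeries.constantCoeff fps = 0 := by
    rw [← PowerSeries.coeff_zero_eq_constantCoeff, hfps_coeff]
    split
    · rw [PowerSeries.coeff_zero_eq_constantCoeff]; exact hπb0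
    · rfl
  have hfpsH : ∀ l : ℕ, ¬ p ^ i ∣ l → PowerSeries.coeff l fps = 0 := by
    intro l hl
    rw [hfps_coeff]
    split
    · next hlj => exact IH l hlj hl
    · rfl
  have hcoeff_eq : ∀ d, d < j → PowerSeries.coeff d πb = PowerSeries.coeff d fps := by
    intro d hd
    rw [hfps_coeff, if_pos hd]
  -- coefficient j of eq1
  have hc := congrArg (PowerSeries.coeff j) eq1
  rw [coeff_psComp] at hc
  have hrhs : PowerSeries.coeff j (1 + X ^ p ^ i : PowerSeries (ZMod p)) = 0 := by
    rw [map_add, PowerSeries.coeff_one, if_neg hj0, PowerSeries.coeff_X_pow, if_neg, add_zero]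
    intro h
    exact hj (h ▸ dvd_refl _)
  rw [hrhs] at hc
  have hterm : ∀ k ∈ Finset.range (j+1), k ≠ 1 →
      PowerSeries.coeff k Eb * PowerSeries.coeff j (πb ^ k) = 0 := by
    intro k _ hk1
    rcases Nat.eq_zero_or_pos k with hk0 | hk0
    · subst hk0
      rw [pow_zero, PowerSeries.coeff_one, if_neg hj0, mul_zero]
    · have hk2 : 2 ≤ k := by omega
      have : PowerSeries.coeff j (πb ^ k) = PowerSeries.coeff j (fps ^ k) :=
        coeff_pow_congr hπb0 hfps0 hk2 hcoeff_eq
      rw [this, pow_coeff_zmod_zero hfps0 hfpsH k j hj, mul_zero]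
  have hmem : (1 : ℕ) ∈ Finset.range (j+1) := Finset.mem_range.mpr (by omega)
  rw [Finset.sum_eq_single_of_mem 1 hmem hterm, hEb1, one_mul, pow_one] at hc
  exact hc

end St15

namespace St15
variable {p : ℕ} [Fact p.Prime]

lemma pifam_decomp {Ep : PowerSeries ℤ_[p]} (hEp : IsArtinHasseZp p Ep)
    {πfam : ℕ → PowerSeries ℤ_[p]} (hπ : IsPiFamily p Ep πfam) {n i : ℕ} (hni : n ≤ i) :
    πfam i = psComp ((1 + X : PowerSeries ℤ_[p]) ^ p ^ n - 1) (πfam (i - n)) := by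
  set g : PowerSeries ℤ_[p] := (1 + X) ^ p ^ n - 1 with hgdef
  have hg : PowerSeries.constantCoeff g = 0 := by
    rw [hgdef, map_sub, map_pow, map_add, map_one, PowerSeries.constantCoeff_X]
    norm_num
  set j := i - n with hj
  have hh := (hπ j).1
  have hb0 : PowerSeries.constantCoeff (psComp g (πfam j)) = 0 := constantCoeff_psComp hh
  refine psComp_inj (coeff_Ep_one hEp) (hπ i).1 hb0 ?_
  rw [(hπ i).2, ← psComp_assoc hg hh Ep, (hπ j).2, psComp_one_add_X_pow hg]
  have : (1 : PowerSeries ℤ_[p]) + g = (1 + X) ^ p ^ n := by rw [hgdef]; ring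
  rw [this, ← pow_mul, ← pow_add, Nat.add_sub_cancel' hni]

end St15

namespace St15

structure VGood (K : Type*) [NormedField K] (v : K → WithTop ℚ) : Prop where
  hv0 : ∀ y : K, v y = ⊤ ↔ y = 0
  hvmul : ∀ y z : K, v (y * z) = v y + v z
  hvadd : ∀ y z : K, min (v y) (v z) ≤ v (y + z)
  hvnorm : ∀ y z : K, v y ≤ v z ↔ ‖z‖ ≤ ‖y‖

variable {K : Type*} [NormedField K] {v : K → WithTop ℚ}

namespace VGood

lemma norm_add_le_max (hv : VGood K v) (y z : K) : ‖y + z‖ ≤ max ‖y‖ ‖z‖ := by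
  rcases le_total (v y) (v z) with h | h
  · have : v y ≤ v (y + z) := le_trans (by rw [min_eq_left h]) (hv.hvadd y z)
    exact le_max_of_le_left ((hv.hvnorm y (y+z)).mp this)
  · have : v z ≤ v (y + z) := le_trans (by rw [min_eq_right h]) (hv.hvadd y z)
    exact le_max_of_le_right ((hv.hvnorm z (y+z)).mp this)

lemma norm_sum_le (hv : VGood K v) {ι : Type*} (s : Finset ι) (f : ι → K) {B : ℝ}
    (hB : 0 ≤ B) (h : ∀ i ∈ s, ‖f i‖ ≤ B) : ‖∑ i ∈ s, f i‖ ≤ B := by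
  induction s using Finset.cons_induction with
  | empty => simpa using hB
  | cons a s ha ih =>
      rw [Finset.sum_cons]
      refine le_trans (hv.norm_add_le_max _ _) (max_le (h a (Finset.mem_cons_self a s)) ?_)
      exact ih (fun i hi => h i (Finset.mem_cons_of_mem hi))

lemma norm_tsum_le (hv : VGood K v) {ι : Type*} (f : ι → K) {B : ℝ}
    (hB : 0 ≤ B) (h : ∀ i, ‖f i‖ ≤ B) : ‖∑' i, f i‖ ≤ B := by
  by_cases hs : Summable f
  · have ht := hs.hasSum
    refine le_of_tendsto ht.norm (Filter.Eventually.of_forall (fun s => ?_))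
    exact hv.norm_sum_le s f hB (fun i _ => h i)
  · rw [tsum_eq_zero_of_not_summable hs, norm_zero]; exact hB

lemma v_one (hv : VGood K v) : v (1 : K) = 0 := by
  have h := hv.hvmul 1 1
  rw [one_mul] at h
  have hne : v (1 : K) ≠ ⊤ := fun hq => one_ne_zero ((hv.hv0 1).mp hq)
  lift (v (1 : K)) to ℚ using hne with q hq
  rw [← WithTop.coe_add, WithTop.coe_inj] at h  -- q = q + q
  have : q = 0 := by linarith
  rw [this]; rfl

lemma v_neg_one (hv : VGood K v) : v (-1 : K) = 0 := by
  have h := hv.hvmul (-1) (-1)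
  rw [neg_one_mul, neg_neg, hv.v_one] at h
  have hne : v (-1 : K) ≠ ⊤ := fun hq => (neg_ne_zero.mpr (one_ne_zero : (1:K) ≠ 0)) ((hv.hv0 _).mp hq)
  lift (v (-1 : K)) to ℚ using hne with q hq
  rw [← WithTop.coe_add] at h
  have : ((0 : ℚ) : WithTop ℚ) = ((q + q : ℚ) : WithTop ℚ) := by exact_mod_cast h
  rw [WithTop.coe_inj] at this
  have : q = 0 := by linarith [this.symm]
  rw [this]; rfl

lemma v_neg (hv : VGood K v) (y : K) : v (-y) = v y := by
  have : -y = -1 * y := by ring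
  rw [this, hv.hvmul, hv.v_neg_one, zero_add]

lemma v_pow (hv : VGood K v) {y : K} {s : ℚ} (hy : v y = (s : WithTop ℚ)) (k : ℕ) :
    v (y ^ k) = (((k : ℚ) * s : ℚ) : WithTop ℚ) := by
  induction k with
  | zero => simpa using hv.v_one
  | succ k ih =>
      rw [pow_succ, hv.hvmul, ih, hy, ← WithTop.coe_add, WithTop.coe_inj]
      push_cast
      ring

lemma v_sum_nonneg (hv : VGood K v) {ι : Type*} (s : Finset ι) (f : ι → K)
    (h : ∀ i ∈ s, (0 : WithTop ℚ) ≤ v (f i)) : (0 : WithTop ℚ) ≤ v (∑ i ∈ s, f i) := by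
  induction s using Finset.cons_induction with
  | empty =>
      simp only [Finset.sum_empty]
      rw [(hv.hv0 0).mpr rfl]
      exact le_top
  | cons a s ha ih =>
      rw [Finset.sum_cons]
      refine le_trans ?_ (hv.hvadd _ _)
      exact le_min (h a (Finset.mem_cons_self a s)) (ih (fun i hi => h i (Finset.mem_cons_of_mem hi)))

lemma v_prod_const (hv : VGood K v) {ι : Type*} (s : Finset ι) (f : ι → K) (w : ℚ)
    (h : ∀ i ∈ s, v (f i) = (w : WithTop ℚ)) :
    v (∏ i ∈ s, f i) = (((s.card : ℚ) * w : ℚ) : WithTop ℚ) := by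
  induction s using Finset.cons_induction with
  | empty => simpa using hv.v_one
  | cons a s ha ih =>
      rw [Finset.prod_cons, hv.hvmul, h a (Finset.mem_cons_self a s),
        ih (fun i hi => h i (Finset.mem_cons_of_mem hi)), ← WithTop.coe_add, WithTop.coe_inj,
        Finset.card_cons]
      push_cast
      ring

end VGood
end St15

namespace St15
variable {K : Type*} [NormedField K] {v : K → WithTop ℚ}

lemma v_pow_zero (hv : VGood K v) {x : K} (hx : v x = (0 : ℚ)) (k : ℕ) : v (x ^ k) = ((0:ℚ) : WithTop ℚ) := by
  rw [hv.v_pow hx k, mul_zero]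

/-- one-directional comparison of `v (1 - x)` and `v (1 - x^a)` -/
lemma v_one_sub_pow_ge (hv : VGood K v) {x : K} (hx : v x = ((0:ℚ) : WithTop ℚ)) (a : ℕ) :
    v (1 - x) ≤ v (1 - x ^ a) := by
  have hgeom := geom_sum_mul x a
  have h1 : (1 : K) - x ^ a = (∑ i ∈ Finset.range a, x ^ i) * (-(x - 1)) := by
    rw [mul_neg, hgeom]; ring
  rw [h1, hv.hvmul, hv.v_neg]
  have hxm1 : x - 1 = -(1 - x) := by ring
  rw [hxm1, hv.v_neg]
  have hsum : (0 : WithTop ℚ) ≤ v (∑ i ∈ Finset.range a, x ^ i) :=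
    hv.v_sum_nonneg _ _ (fun i _ => by simp [v_pow_zero hv hx i])
  calc v (1 - x) = 0 + v (1 - x) := by rw [zero_add]
    _ ≤ v (∑ i ∈ Finset.range a, x ^ i) + v (1 - x) := add_le_add_left hsum _

lemma v_zeta (hv : VGood K v) {ζ : K} {M : ℕ} (hM : 0 < M) (h1 : ζ ^ M = 1) :
    v ζ = ((0:ℚ) : WithTop ℚ) := by
  have hζ0 : ζ ≠ 0 := by
    intro h; rw [h, zero_pow hM.ne'] at h1; exact one_ne_zero h1.symm
  have hne : v ζ ≠ ⊤ := fun hq => hζ0 ((hv.hv0 _).mp hq)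
  lift (v ζ) to ℚ using hne with q hq
  have := hv.v_pow hq.symm M
  rw [h1, hv.v_one] at this
  have h0 : (M : ℚ) * q = 0 := by exact_mod_cast this.symm
  have hq0 : q = 0 := by
    rcases mul_eq_zero.mp h0 with h | h
    · exact absurd h (by positivity)
    · exact h
  rw [hq0]

/-- the key cyclotomic computation: `totient (p^n) * v (ζ - 1) = 1`. -/
lemma v_zeta_sub_one (p n : ℕ) [hp : Fact p.Prime] (hn : 1 ≤ n)
    (hv : VGood K v) (hvp : v ((p : K)) = 1)
    {ζ : K} (hζ : IsPrimitiveRoot ζ (p ^ n)) :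
    ∃ w : ℚ, v (ζ - 1) = (w : WithTop ℚ) ∧ (((p ^ n).totient : ℚ)) * w = 1 := by
  haveI : NeZero (p ^ n) := ⟨pow_ne_zero _ hp.out.ne_zero⟩
  have hpn1 : 1 < p ^ n :=
    Nat.one_lt_pow (by omega) hp.out.one_lt
  have hζ1 : ζ ≠ 1 := hζ.ne_one hpn1
  have hz0 : v ζ = ((0:ℚ) : WithTop ℚ) := v_zeta hv (by positivity) hζ.pow_eq_one
  -- v (1 - η) = v (1 - ζ) for each primitive root η
  have hvconst : ∀ η ∈ primitiveRoots (p ^ n) K, v (1 - η) = v (1 - ζ) := by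
    intro η hη
    rw [mem_primitiveRoots (by positivity)] at hη
    obtain ⟨a, _, ha⟩ := hζ.eq_pow_of_pow_eq_one hη.pow_eq_one
    obtain ⟨b, _, hb⟩ := hη.eq_pow_of_pow_eq_one hζ.pow_eq_one
    have hηz : v η = ((0:ℚ) : WithTop ℚ) := v_zeta hv (by positivity) hη.pow_eq_one
    refine le_antisymm ?_ ?_
    · rw [← hb]; exact v_one_sub_pow_ge hv hηz b
    · rw [← ha]; exact v_one_sub_pow_ge hv hz0 a
  -- the product identity
  have hcyc := Polynomial.cyclotomic_eq_prod_X_sub_primitiveRoots hζ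
  have heval := congrArg (Polynomial.eval (1 : K)) hcyc
  have hn' : p ^ n = p ^ ((n - 1) + 1) := by congr 1; omega
  rw [hn', Polynomial.eval_one_cyclotomic_prime_pow, Polynomial.eval_prod] at heval
  simp only [Polynomial.eval_sub, Polynomial.eval_X, Polynomial.eval_C] at heval
  rw [← hn'] at heval
  -- extract w
  have h1ζ : (1 : K) - ζ ≠ 0 := fun h => hζ1 (by linear_combination -h)
  have hne : v (1 - ζ) ≠ ⊤ := fun hq => h1ζ ((hv.hv0 _).mp hq)
  lift (v (1 - ζ)) to ℚ using hne with w hw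
  have hprod := hv.v_prod_const (primitiveRoots (p ^ n) K) (fun η => 1 - η) w
    (fun η hη => hvconst η hη)
  rw [← heval, hvp, hζ.card_primitiveRoots] at hprod
  have hcard : (((p ^ n).totient : ℚ)) * w = 1 := by
    have : ((1 : ℚ) : WithTop ℚ) = ((((p ^ n).totient : ℚ) * w : ℚ) : WithTop ℚ) := by
      exact_mod_cast hprod
    exact_mod_cast (WithTop.coe_inj.mp this).symm
  refine ⟨w, ?_, hcard⟩
  have : ζ - 1 = -(1 - ζ) := by ring
  rw [this, hv.v_neg]
  exact hw.symm
end St15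

namespace St15

variable {p : ℕ} [Fact p.Prime] {K : Type*} [NormedField K] [Algebra ℚ_[p] K]

lemma normA (hiso : ∀ y : ℚ_[p], ‖algebraMap ℚ_[p] K y‖ = ‖y‖) (x : ℤ_[p]) :
    ‖algebraMap ℚ_[p] K (PadicInt.Coe.ringHom x)‖ = ‖x‖ := by
  rw [hiso, PadicInt.norm_def]; rfl

lemma normA_le_one (hiso : ∀ y : ℚ_[p], ‖algebraMap ℚ_[p] K y‖ = ‖y‖) (x : ℤ_[p]) :
    ‖algebraMap ℚ_[p] K (PadicInt.Coe.ringHom x)‖ ≤ 1 := by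
  rw [normA hiso]; exact PadicInt.norm_le_one x

lemma norm_small_of_toZMod_zero {x : ℤ_[p]} (h : PadicInt.toZMod x = 0) :
    ‖x‖ ≤ ((p : ℝ))⁻¹ := by
  have hx : x ∈ IsLocalRing.maximalIdeal ℤ_[p] := by
    rw [← PadicInt.ker_toZMod, RingHom.mem_ker]; exact h
  rw [PadicInt.maximalIdeal_eq_span_p] at hx
  have := (PadicInt.norm_le_pow_iff_mem_span_pow x 1).mpr (by simpa using hx)
  simpa using this

variable [CompleteSpace K]

lemma summable_piEval_terms {v : K → WithTop ℚ}
    (hiso : ∀ y : ℚ_[p], ‖algebraMap ℚ_[p] K y‖ = ‖y‖)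
    {ζ : K} (ht1 : ‖ζ - 1‖ < 1) (F : PowerSeries ℤ_[p]) :
    Summable (fun j : ℕ =>
      algebraMap ℚ_[p] K (PadicInt.Coe.ringHom (PowerSeries.coeff j F)) * (ζ - 1) ^ j) := by
  refine Summable.of_norm_bounded
    (summable_geometric_of_lt_one (norm_nonneg _) ht1) (fun j => ?_)
  rw [norm_mul, norm_pow]
  calc ‖algebraMap ℚ_[p] K (PadicInt.Coe.ringHom (PowerSeries.coeff j F))‖ * ‖ζ - 1‖ ^ j
      ≤ 1 * ‖ζ - 1‖ ^ j := by
        refine mul_le_mul_of_nonneg_right (normA_le_one hiso _) (by positivity)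
    _ = ‖ζ - 1‖ ^ j := one_mul _

/-- For `i ≥ n`, `π_i(π_n) = 0`. -/
lemma piEval_eq_zero {v : K → WithTop ℚ} (hv : VGood K v)
    (hiso : ∀ y : ℚ_[p], ‖algebraMap ℚ_[p] K y‖ = ‖y‖)
    {Ep : PowerSeries ℤ_[p]} (hEp : IsArtinHasseZp p Ep)
    {πfam : ℕ → PowerSeries ℤ_[p]} (hπ : IsPiFamily p Ep πfam)
    {n : ℕ} (hn : 1 ≤ n) {ζ : K} (hζpow : ζ ^ p ^ n = 1) (ht1 : ‖ζ - 1‖ < 1)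
    {i : ℕ} (hni : n ≤ i) :
    piEval p πfam K ζ i = 0 := by
  classical
  set π : K := ζ - 1 with hπdef
  set t : ℝ := ‖π‖ with htdef
  have ht0 : 0 ≤ t := norm_nonneg _
  set A : ℤ_[p] →+* K := (algebraMap ℚ_[p] K).comp PadicInt.Coe.ringHom with hAdef
  have hnormA : ∀ x : ℤ_[p], ‖A x‖ = ‖x‖ := fun x => normA hiso x
  set g : PowerSeries ℤ_[p] := (1 + X) ^ p ^ n - 1 with hgdef
  have hg : PowerSeries.constantCoeff g = 0 := by
    rw [hgdef, map_sub, map_pow, map_add, map_one, PowerSeries.constantCoeff_X]; norm_num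
  set h : PowerSeries ℤ_[p] := πfam (i - n) with hhdef
  have hh0 : PowerSeries.constantCoeff h = 0 := (hπ (i - n)).1
  have hdecomp : πfam i = psComp g h := pifam_decomp hEp hπ hni
  set GQ : Polynomial ℤ_[p] := (1 + Polynomial.X) ^ p ^ n - 1 with hGQdef
  have hGQcoe : ((GQ : Polynomial ℤ_[p]) : PowerSeries ℤ_[p]) = g := by
    rw [hGQdef, hgdef]
    push_cast
    rfl
  have hcoeffg : ∀ k j : ℕ, PowerSeries.coeff j (g ^ k) = (GQ ^ k).coeff j := by
    intro k j
    rw [← hGQcoe, ← Polynomial.coe_pow, Polynomial.coeff_coe]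
  have hGQdeg : GQ.natDegree ≤ p ^ n := by
    have h1 : ((1 : Polynomial ℤ_[p]) + Polynomial.X).natDegree ≤ 1 := by
      refine le_trans (Polynomial.natDegree_add_le _ _) ?_
      simp [Polynomial.natDegree_one, Polynomial.natDegree_X]
    have h2 : (((1 : Polynomial ℤ_[p]) + Polynomial.X) ^ p ^ n).natDegree ≤ p ^ n := by
      refine le_trans Polynomial.natDegree_pow_le ?_
      calc p ^ n * ((1 : Polynomial ℤ_[p]) + Polynomial.X).natDegree ≤ p ^ n * 1 :=
            Nat.mul_le_mul_left _ h1
        _ = p ^ n := Nat.mul_one _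
    refine le_trans (Polynomial.natDegree_sub_le _ _) ?_
    simp only [Polynomial.natDegree_one, max_le_iff]
    exact ⟨h2, by positivity⟩
  -- partial sums
  set f : ℕ → K := fun j => A (PowerSeries.coeff j (πfam i)) * π ^ j with hfdef
  have hsummable : Summable f := summable_piEval_terms (v := v) hiso ht1 (πfam i)
  set T : ℕ → ℕ → K := fun k N => ∑ j ∈ Finset.range N, A ((GQ ^ k).coeff j) * π ^ j with hTdef
  have hSN : ∀ N : ℕ, ∑ j ∈ Finset.range N, f j
      = ∑ k ∈ Finset.range N, A (PowerSeries.coeff k h) * T k N := by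
    intro N
    have hstep : ∀ j ∈ Finset.range N, f j
        = ∑ k ∈ Finset.range N,
            (A (PowerSeries.coeff k h) * A ((GQ ^ k).coeff j)) * π ^ j := by
      intro j hj
      rw [Finset.mem_range] at hj
      have : f j = ∑ k ∈ Finset.range (j+1),
          (A (PowerSeries.coeff k h) * A ((GQ ^ k).coeff j)) * π ^ j := by
        rw [hfdef]
        simp only [hdecomp, coeff_psComp, map_sum, Finset.sum_mul]
        refine Finset.sum_congr rfl (fun k _ => ?_)
        rw [← map_mul, hcoeffg]
      rw [this]
      refine Finset.sum_subset (Finset.range_subset_range.mpr (by omega)) (fun k _ hk => ?_)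
      rw [Finset.mem_range, not_lt] at hk
      have : (GQ ^ k).coeff j = 0 := by
        rw [← hcoeffg]
        exact coeff_pow_eq_zero_of_lt hg (by omega)
      rw [this, map_zero, mul_zero, zero_mul]
    rw [Finset.sum_congr rfl hstep, Finset.sum_comm]
    refine Finset.sum_congr rfl (fun k _ => ?_)
    rw [hTdef, Finset.mul_sum]
    refine Finset.sum_congr rfl (fun j _ => ?_)
    ring
  -- T is zero for small k ≥ 1
  have hTzero : ∀ k N : ℕ, 1 ≤ k → k * p ^ n < N → T k N = 0 := by
    intro k N hk1 hkN
    have hdeg : (Polynomial.map A (GQ ^ k)).natDegree < N := by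
      refine lt_of_le_of_lt (le_trans (Polynomial.natDegree_map_le) ?_) hkN
      refine le_trans Polynomial.natDegree_pow_le ?_
      exact Nat.mul_le_mul_left _ hGQdeg
    have : T k N = Polynomial.eval π (Polynomial.map A (GQ ^ k)) := by
      rw [Polynomial.eval_eq_sum_range' hdeg, hTdef]
      refine Finset.sum_congr rfl (fun j _ => ?_)
      rw [Polynomial.coeff_map]
    rw [this, Polynomial.map_pow, Polynomial.eval_pow]
    have hGQeval : Polynomial.eval π (Polynomial.map A GQ) = 0 := by
      rw [hGQdef]
      simp only [Polynomial.map_sub, Polynomial.map_pow, Polynomial.map_add,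
        Polynomial.map_one, Polynomial.map_X, Polynomial.eval_sub, Polynomial.eval_pow,
        Polynomial.eval_add, Polynomial.eval_one, Polynomial.eval_X]
      rw [hπdef]
      rw [add_sub_cancel]
      rw [hζpow]
      ring
    rw [hGQeval, zero_pow (by omega)]
  -- bound on T
  have hTbound : ∀ k N : ℕ, ‖T k N‖ ≤ t ^ k := by
    intro k N
    refine hv.norm_sum_le _ _ (by positivity) (fun j hj => ?_)
    by_cases hjk : j < k
    · have : (GQ ^ k).coeff j = 0 := by
        rw [← hcoeffg]; exact coeff_pow_eq_zero_of_lt hg hjk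
      rw [this, map_zero, zero_mul, norm_zero]; positivity
    · push_neg at hjk
      rw [norm_mul, norm_pow]
      calc ‖A ((GQ ^ k).coeff j)‖ * t ^ j ≤ 1 * t ^ j := by
            refine mul_le_mul_of_nonneg_right ?_ (by positivity)
            rw [hnormA]; exact PadicInt.norm_le_one _
        _ = t ^ j := one_mul _
        _ ≤ t ^ k := pow_le_pow_of_le_one ht0 ht1.le hjk
  -- bound on S_N
  have hSbound : ∀ N : ℕ, ‖∑ j ∈ Finset.range N, f j‖ ≤ t ^ (N / p ^ n) := by
    intro N
    rw [hSN N]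
    refine hv.norm_sum_le _ _ (by positivity) (fun k hk => ?_)
    rcases Nat.eq_zero_or_pos k with hk0 | hk0
    · subst hk0
      rw [PowerSeries.coeff_zero_eq_constantCoeff, hh0, map_zero, zero_mul, norm_zero]
      positivity
    by_cases hkN : k * p ^ n < N
    · rw [hTzero k N hk0 hkN, mul_zero, norm_zero]; positivity
    · push_neg at hkN
      have hdivle : N / p ^ n ≤ k := by
        have := Nat.div_le_div_right (c := p ^ n) hkN
        rwa [Nat.mul_div_cancel k (pow_pos (Fact.out : p.Prime).pos n)] at this
      rw [norm_mul]
      calc ‖A _‖ * ‖T k N‖ ≤ 1 * (t ^ k) := by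
            refine mul_le_mul (by rw [hnormA]; exact PadicInt.norm_le_one _)
              (hTbound k N) (norm_nonneg _) zero_le_one
        _ = t ^ k := one_mul _
        _ ≤ t ^ (N / p ^ n) := pow_le_pow_of_le_one ht0 ht1.le hdivle
  -- limits
  have hlim2 : Filter.Tendsto (fun N => ∑ j ∈ Finset.range N, f j) Filter.atTop (nhds 0) := by
    refine squeeze_zero_norm hSbound ?_
    have hdiv : Filter.Tendsto (fun N : ℕ => N / p ^ n) Filter.atTop Filter.atTop :=
      Nat.tendsto_div_const_atTop (pow_ne_zero n (Fact.out : p.Prime).ne_zero)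
    exact (tendsto_pow_atTop_nhds_zero_of_lt_one ht0 ht1).comp hdiv
  have hlim1 : Filter.Tendsto (fun N => ∑ j ∈ Finset.range N, f j) Filter.atTop
      (nhds (piEval p πfam K ζ i)) := by
    have := hsummable.hasSum.tendsto_sum_nat
    exact this
  exact tendsto_nhds_unique hlim1 hlim2

end St15

namespace St15
variable {p : ℕ} [Fact p.Prime] {K : Type*} [NormedField K] [Algebra ℚ_[p] K] [CompleteSpace K]

lemma norm_piEval_le {v : K → WithTop ℚ} (hv : VGood K v)
    (hiso : ∀ y : ℚ_[p], ‖algebraMap ℚ_[p] K y‖ = ‖y‖)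
    {Ep : PowerSeries ℤ_[p]} (hEp : IsArtinHasseZp p Ep)
    {πfam : ℕ → PowerSeries ℤ_[p]} (hπ : IsPiFamily p Ep πfam)
    {n : ℕ} (hn : 1 ≤ n) {ζ : K} (hζpow : ζ ^ p ^ n = 1)
    (ht1 : ‖ζ - 1‖ < 1)
    (htc : ‖ζ - 1‖ ^ (p ^ n).totient = ((p : ℝ))⁻¹) (i : ℕ) :
    ‖piEval p πfam K ζ i‖ ≤ ((p : ℝ))⁻¹ ^ (((p ^ i : ℕ) : ℝ) / ((p ^ n).totient : ℝ) : ℝ) := by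
  classical
  set t : ℝ := ‖ζ - 1‖ with htdef
  set ρ : ℝ := ((p : ℝ))⁻¹ with hρdef
  set c : ℕ := (p ^ n).totient with hcdef
  have hp2 : 2 ≤ p := (Fact.out : p.Prime).two_le
  have hρ0 : 0 < ρ := by
    rw [hρdef]; positivity
  have hρ1 : ρ < 1 := by
    rw [hρdef, inv_lt_one_iff₀]
    right
    exact_mod_cast by omega
  have hc0 : 0 < c := Nat.totient_pos.mpr (pow_pos (by omega) n)
  have ht0 : 0 < t := by
    rcases lt_or_eq_of_le (norm_nonneg (ζ - 1)) with h | h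
    · exact h
    · exfalso
      rw [htdef, ← h] at htc
      rw [zero_pow hc0.ne'] at htc
      exact absurd htc.symm (by positivity)
  -- t as ρ^(1/c)
  have hrpowtc : t ^ ((c : ℝ)) = ρ := by
    rw [Real.rpow_natCast, htc]
  have htρ : ρ ^ ((1 : ℝ) / c) = t := by
    rw [← hrpowtc, ← Real.rpow_mul ht0.le]
    rw [mul_one_div, div_self (by exact_mod_cast hc0.ne')]
    exact Real.rpow_one t
  have hgenpow : ∀ M : ℕ, t ^ M = ρ ^ (((M : ℕ) : ℝ) / c) := by
    intro M
    rw [← hrpowtc, ← Real.rpow_mul ht0.le, ← Real.rpow_natCast t M]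
    congr 1
    field_simp
  rcases le_or_gt n i with hni | hin
  · rw [piEval_eq_zero hv hiso hEp hπ hn hζpow ht1 hni, norm_zero]
    positivity
  -- i < n
  have hpc : p ^ i ≤ c + 1 := by
    have h1 : p ^ i ≤ p ^ (n - 1) := Nat.pow_le_pow_right (by omega) (by omega)
    have h2 : p ^ (n - 1) ≤ c := by
      rw [hcdef, Nat.totient_prime_pow (Fact.out : p.Prime) (by omega)]
      exact Nat.le_mul_of_pos_right _ (by omega)
    omega
  refine hv.norm_tsum_le _ (by positivity) (fun j => ?_)
  rw [norm_mul, norm_pow, ← htdef]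
  by_cases hdvd : p ^ i ∣ j
  · rcases Nat.eq_zero_or_pos j with hj0 | hj0
    · subst hj0
      rw [pow_zero, mul_one, PowerSeries.coeff_zero_eq_constantCoeff, (hπ i).1,
        map_zero, map_zero, norm_zero]
      positivity
    have hjpi : p ^ i ≤ j := Nat.le_of_dvd hj0 hdvd
    calc ‖algebraMap ℚ_[p] K (PadicInt.Coe.ringHom (PowerSeries.coeff j (πfam i)))‖ * t ^ j
        ≤ 1 * t ^ j := mul_le_mul_of_nonneg_right (normA_le_one hiso _) (by positivity)
      _ = t ^ j := one_mul _
      _ ≤ t ^ (p ^ i) := pow_le_pow_of_le_one ht0.le ht1.le hjpi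
      _ = ρ ^ (((p ^ i : ℕ) : ℝ) / c) := hgenpow _
  · have hj0 : j ≠ 0 := fun h => hdvd (h ▸ dvd_zero _)
    have hcoeffsmall : ‖PowerSeries.coeff j (πfam i)‖ ≤ ρ := by
      rw [hρdef]
      exact norm_small_of_toZMod_zero (coeff_pifam_modp hEp hπ i j hdvd)
    calc ‖algebraMap ℚ_[p] K (PadicInt.Coe.ringHom (PowerSeries.coeff j (πfam i)))‖ * t ^ j
        ≤ ρ * t ^ j := by
          rw [normA hiso]
          exact mul_le_mul_of_nonneg_right hcoeffsmall (by positivity)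
      _ ≤ ρ * t ^ 1 := by
          refine mul_le_mul_of_nonneg_left ?_ hρ0.le
          exact pow_le_pow_of_le_one ht0.le ht1.le (by omega)
      _ = ρ ^ ((((c+1) : ℕ) : ℝ) / c) := by
          have hexp : ((((c+1) : ℕ) : ℝ) / c) = 1 + 1 / (c : ℝ) := by
            have : (c : ℝ) ≠ 0 := by exact_mod_cast hc0.ne'
            push_cast
            field_simp
          rw [hexp, Real.rpow_add hρ0, Real.rpow_one, htρ, pow_one]
      _ ≤ ρ ^ (((p ^ i : ℕ) : ℝ) / c) := by
          refine Real.rpow_le_rpow_of_exponent_ge hρ0 hρ1.le ?_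
          have hpc' : ((p ^ i : ℕ) : ℝ) ≤ (((c+1) : ℕ) : ℝ) := by exact_mod_cast hpc
          gcongr

end St15

namespace St15

lemma prod_rpow {ι : Type*} (s : Finset ι) (f : ι → ℝ) {ρ : ℝ} (hρ : 0 < ρ) :
    ∏ i ∈ s, ρ ^ (f i) = ρ ^ (∑ i ∈ s, f i) := by
  induction s using Finset.cons_induction with
  | empty => simp
  | cons a s ha ih => rw [Finset.prod_cons, Finset.sum_cons, ih, ← Real.rpow_add hρ]

end St15

/-- for every integer `n ≥ 1` and every `r ∈ R` one has
`v_{π_n}(ev_n(r)) ≥ v(r)`.  Here `K = ℚ_p(ζ_{p^n})` is given as a complete normed field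
isometrically containing `ℚ_p`, generated by a primitive `p^n`-th root of unity `ζ`,
with normalized valuation `v` (`v(p) = 1`) given by its characterizing properties. -/
theorem statement15 (p m dm : ℕ) [Fact p.Prime] (hdm : 1 ≤ dm) (hpdm : ¬ p ∣ dm)
    (Ep : PowerSeries ℤ_[p]) (hEp : IsArtinHasseZp p Ep)
    (πfam : ℕ → PowerSeries ℤ_[p]) (hπ : IsPiFamily p Ep πfam)
    (n : ℕ) (hn : 1 ≤ n)
    (K : Type*) [NormedField K] [CompleteSpace K] [Algebra ℚ_[p] K]
    (hiso : ∀ y : ℚ_[p], ‖algebraMap ℚ_[p] K y‖ = ‖y‖)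
    (ζ : K) (hζ : IsPrimitiveRoot ζ (p ^ n))
    (hKgen : Algebra.adjoin ℚ_[p] ({ζ} : Set K) = ⊤)
    (v : K → WithTop ℚ)
    (hv0 : ∀ y : K, v y = ⊤ ↔ y = 0)
    (hvmul : ∀ y z : K, v (y * z) = v y + v z)
    (hvadd : ∀ y z : K, min (v y) (v z) ≤ v (y + z))
    (hvp : v ((p : K)) = 1)
    (hvnorm : ∀ y z : K, v y ≤ v z ↔ ‖z‖ ≤ ‖y‖)
    (r : MvPowerSeries (Xfrak p m dm) ℤ_[p]) :
    vR p m dm r ≤ vpin p n v (evn p m dm πfam K ζ r) := by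
  classical
  have hv : St15.VGood K v := ⟨hv0, hvmul, hvadd, hvnorm⟩
  have hp2 : 2 ≤ p := (Fact.out : p.Prime).two_le
  set cn : ℕ := (p ^ n).totient with hcndef
  have hcn_eq : cn = p ^ (n - 1) * (p - 1) := by
    rw [hcndef, Nat.totient_prime_pow (Fact.out : p.Prime) (by omega)]
  have hcn0 : 0 < cn := Nat.totient_pos.mpr (pow_pos (by omega) n)
  have hcast : ((p : ℚ) ^ (n - 1) * ((p : ℚ) - 1) : ℚ) = (cn : ℚ) := by
    rw [hcn_eq]
    push_cast [Nat.cast_sub (by omega : 1 ≤ p)]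
    ring
  set ρ : ℝ := ((p : ℝ))⁻¹ with hρdef
  have hρ0 : 0 < ρ := by rw [hρdef]; positivity
  have hρ1 : ρ < 1 := by
    rw [hρdef, inv_lt_one_iff₀]; right; exact_mod_cast by omega
  have hζpow : ζ ^ p ^ n = 1 := hζ.pow_eq_one
  -- the valuation of ζ - 1
  obtain ⟨w, hw, hcw⟩ := St15.v_zeta_sub_one p n hn hv hvp hζ
  -- norm facts
  have hnormp : ‖(p : K)‖ = ρ := by
    rw [show ((p : K)) = algebraMap ℚ_[p] K ((p : ℚ_[p])) by rw [map_natCast], hiso,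
      hρdef, Padic.norm_p]
  set t : ℝ := ‖ζ - 1‖ with htdef
  have hvpc : v ((ζ - 1) ^ cn) = ((1 : ℚ) : WithTop ℚ) := by
    rw [hv.v_pow hw cn, hcw]
  have hveq : v ((ζ - 1) ^ cn) = v ((p : K)) := by
    rw [hvpc, hvp]; rfl
  have htc : t ^ cn = ρ := by
    have h1 : ‖(ζ - 1) ^ cn‖ ≤ ‖(p : K)‖ := (hvnorm _ _).mp (le_of_eq hveq.symm)
    have h2 : ‖(p : K)‖ ≤ ‖(ζ - 1) ^ cn‖ := (hvnorm _ _).mp (le_of_eq hveq)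
    rw [← hnormp, ← norm_pow]
    exact le_antisymm h1 h2
  have ht0 : 0 ≤ t := norm_nonneg _
  have ht1 : t < 1 := by
    by_contra hcon
    push_neg at hcon
    have : (1 : ℝ) ≤ t ^ cn := one_le_pow₀ hcon
    rw [htc] at this
    linarith
  -- case r = 0
  by_cases hr : r = 0
  · subst hr
    rw [vR, if_pos rfl]
    have hevn0 : evn p m dm πfam K ζ 0 = 0 := by
      rw [evn]
      convert tsum_zero with u
      rw [map_zero, map_zero, map_zero, zero_mul]
    rw [vpin, hevn0, (hv0 0).mpr rfl, hcast,
      WithTop.mul_top (show ((cn : ℚ) : WithTop ℚ) ≠ 0 by exact_mod_cast hcn0.ne')]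
  -- case r ≠ 0
  rw [vR, if_neg hr]
  set S : Set ℕ := {w : ℕ | ∃ u : (Xfrak p m dm) →₀ ℕ,
      MvPowerSeries.coeff u r ≠ 0 ∧ w = u.sum fun x k => x.1.2 * k} with hSdef
  set w0 : ℕ := sInf S with hw0def
  set a : ℕ := w0 * p ^ m with hadef
  set b : ℕ := dm * cn with hbdef
  have hb0 : 0 < b := by positivity
  set x : ℝ := ((a : ℕ) : ℝ) / ((b : ℕ) : ℝ) with hxdef
  set Y : K := evn p m dm πfam K ζ r with hYdef
  -- per-term norm bound
  have hterm : ∀ u : (Xfrak p m dm) →₀ ℕ,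
      ‖algebraMap ℚ_[p] K (PadicInt.Coe.ringHom (MvPowerSeries.coeff u r))
        * (u.prod fun y k => (piEval p πfam K ζ y.1.1) ^ k)‖ ≤ ρ ^ x := by
    intro u
    by_cases hcu : MvPowerSeries.coeff u r = 0
    · rw [hcu, map_zero, map_zero, zero_mul, norm_zero]
      positivity
    have hW : w0 ≤ u.sum fun y k => y.1.2 * k := Nat.sInf_le ⟨u, hcu, rfl⟩
    set W : ℕ := u.sum fun y k => y.1.2 * k with hWdef
    rw [norm_mul]
    have hprodbound : ‖u.prod fun y k => (piEval p πfam K ζ y.1.1) ^ k‖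
        ≤ ρ ^ (((W * p ^ m : ℕ) : ℝ) / ((b : ℕ) : ℝ)) := by
      rw [Finsupp.prod, norm_prod]
      have hfac : ∀ y ∈ u.support,
          ‖(piEval p πfam K ζ y.1.1) ^ (u y)‖
            ≤ ρ ^ (((y.1.2 * u y * p ^ m : ℕ) : ℝ) / ((b : ℕ) : ℝ)) := by
        intro y hy
        rw [norm_pow]
        have h1 : ‖piEval p πfam K ζ y.1.1‖
            ≤ ρ ^ (((p ^ y.1.1 : ℕ) : ℝ) / ((cn : ℕ) : ℝ)) :=
          St15.norm_piEval_le hv hiso hEp hπ hn hζpow ht1 htc y.1.1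
        calc ‖piEval p πfam K ζ y.1.1‖ ^ (u y)
            ≤ (ρ ^ (((p ^ y.1.1 : ℕ) : ℝ) / ((cn : ℕ) : ℝ))) ^ (u y) :=
              pow_le_pow_left₀ (norm_nonneg _) h1 _
          _ = ρ ^ ((((p ^ y.1.1 : ℕ) : ℝ) / ((cn : ℕ) : ℝ)) * ((u y : ℕ) : ℝ)) := by
              rw [← Real.rpow_natCast (ρ ^ (((p ^ y.1.1 : ℕ) : ℝ) / ((cn : ℕ) : ℝ))) (u y),
                ← Real.rpow_mul hρ0.le]
          _ ≤ ρ ^ (((y.1.2 * u y * p ^ m : ℕ) : ℝ) / ((b : ℕ) : ℝ)) := by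
              refine Real.rpow_le_rpow_of_exponent_ge hρ0 hρ1.le ?_
              have hxmem : y.1.2 * p ^ m ≤ dm * p ^ y.1.1 := y.2.1
              have hineq : (y.1.2 * u y * p ^ m) * cn ≤ (p ^ y.1.1 * u y) * b := by
                rw [hbdef]
                calc (y.1.2 * u y * p ^ m) * cn = (y.1.2 * p ^ m) * (u y * cn) := by ring
                  _ ≤ (dm * p ^ y.1.1) * (u y * cn) :=
                      Nat.mul_le_mul_right _ hxmem
                  _ = (p ^ y.1.1 * u y) * (dm * cn) := by ring
              rw [div_mul_eq_mul_div, div_le_div_iff₀ (by exact_mod_cast hb0) (by exact_mod_cast hcn0)]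
              exact_mod_cast hineq
      calc ∏ y ∈ u.support, ‖(piEval p πfam K ζ y.1.1) ^ (u y)‖
          ≤ ∏ y ∈ u.support, ρ ^ (((y.1.2 * u y * p ^ m : ℕ) : ℝ) / ((b : ℕ) : ℝ)) := by
            refine Finset.prod_le_prod (fun y _ => norm_nonneg _) hfac
        _ = ρ ^ (∑ y ∈ u.support, ((y.1.2 * u y * p ^ m : ℕ) : ℝ) / ((b : ℕ) : ℝ)) :=
            St15.prod_rpow _ _ hρ0
        _ = ρ ^ (((W * p ^ m : ℕ) : ℝ) / ((b : ℕ) : ℝ)) := by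
            congr 1
            rw [← Finset.sum_div]
            congr 1
            have : (W * p ^ m : ℕ) = ∑ y ∈ u.support, (y.1.2 * u y * p ^ m : ℕ) := by
              rw [hWdef, Finsupp.sum, Finset.sum_mul]
            rw [this]
            push_cast
            rfl
    calc ‖algebraMap ℚ_[p] K (PadicInt.Coe.ringHom (MvPowerSeries.coeff u r))‖
          * ‖u.prod fun y k => (piEval p πfam K ζ y.1.1) ^ k‖
        ≤ 1 * (ρ ^ (((W * p ^ m : ℕ) : ℝ) / ((b : ℕ) : ℝ))) :=
          mul_le_mul (St15.normA_le_one hiso _) hprodbound (norm_nonneg _) zero_le_one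
      _ = ρ ^ (((W * p ^ m : ℕ) : ℝ) / ((b : ℕ) : ℝ)) := one_mul _
      _ ≤ ρ ^ x := by
          refine Real.rpow_le_rpow_of_exponent_ge hρ0 hρ1.le ?_
          rw [hxdef]
          have : (a : ℝ) ≤ ((W * p ^ m : ℕ) : ℝ) := by
            have : a ≤ W * p ^ m := Nat.mul_le_mul_right _ hW
            exact_mod_cast this
          gcongr
  have hYbound : ‖Y‖ ≤ ρ ^ x := by
    rw [hYdef, evn]
    exact hv.norm_tsum_le _ (by positivity) hterm
  -- key valuation inequality
  have hkey : v ((p : K) ^ a) ≤ v (Y ^ b) := by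
    rw [hvnorm]
    rw [norm_pow, norm_pow, hnormp]
    calc ‖Y‖ ^ b ≤ (ρ ^ x) ^ b := pow_le_pow_left₀ (norm_nonneg _) hYbound _
      _ = ρ ^ (x * (b : ℝ)) := by
          rw [← Real.rpow_natCast (ρ ^ x) b, ← Real.rpow_mul hρ0.le]
      _ = ρ ^ ((a : ℝ)) := by
          congr 1
          rw [hxdef]
          field_simp
      _ = ρ ^ a := Real.rpow_natCast ρ a
  have hvp' : v ((p : K)) = ((1 : ℚ) : WithTop ℚ) := by rw [hvp]; rfl
  have hva : v ((p : K) ^ a) = (((a : ℚ)) : WithTop ℚ) := by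
    rw [hv.v_pow hvp' a, mul_one]
  -- conclude
  rw [vpin, hcast]
  by_cases hY : v Y = ⊤
  · rw [hY, WithTop.mul_top (by exact_mod_cast hcn0.ne' : ((cn : ℚ) : WithTop ℚ) ≠ 0)]
    exact le_top
  lift (v Y) to ℚ using hY with s hs
  have hvYb : v (Y ^ b) = (((b : ℚ) * s : ℚ) : WithTop ℚ) := hv.v_pow hs.symm b
  rw [hva, hvYb] at hkey
  have hkeyQ : (a : ℚ) ≤ (b : ℚ) * s := by exact_mod_cast hkey
  have ha' : (a : ℚ) = (w0 : ℚ) * (p : ℚ) ^ m := by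
    show ((w0 * p ^ m : ℕ) : ℚ) = (w0 : ℚ) * (p : ℚ) ^ m
    push_cast; ring
  have hb' : (b : ℚ) = (dm : ℚ) * (cn : ℚ) := by
    show ((dm * cn : ℕ) : ℚ) = (dm : ℚ) * (cn : ℚ)
    push_cast; ring
  have hfinal : ((w0 : ℚ) * (p : ℚ) ^ m / (dm : ℚ) : ℚ) ≤ (cn : ℚ) * s := by
    rw [div_le_iff₀ (by exact_mod_cast hdm : (0:ℚ) < (dm:ℚ))]
    calc (w0 : ℚ) * (p : ℚ) ^ m = (a : ℚ) := ha'.symm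
      _ ≤ (b : ℚ) * s := hkeyQ
      _ = (cn : ℚ) * s * (dm : ℚ) := by rw [hb']; ring
  calc (((w0 : ℚ) * (p : ℚ) ^ m / (dm : ℚ) : ℚ) : WithTop ℚ)
      ≤ (((cn : ℚ) * s : ℚ) : WithTop ℚ) := by exact_mod_cast hfinal
    _ = ((cn : ℚ) : WithTop ℚ) * ((s : ℚ) : WithTop ℚ) := by
        rw [← WithTop.coe_mul]

end
end
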